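/- Let M ⊆ ℤ^m be an affine monoid with facets F₁,…,F_t of cone(M) defined by linear forms α₁,…,α_t. If gp(M) ∩ relint(cone(M)) ⊆ M, then for each i, M_i = (gp(M) ∩ {x : α_i(x) > 0}) ∪ gp(M ∩ F_i), where M_i = { a ∈ gp(M) : a + b ∈ M for some b ∈ M ∩ F_i }. -/

import Mathlib

noncomputable section

/-- The canonical embedding `ℤ^m → ℝ^m`. -/
def toR {m : ℕ} (x : Fin m → ℤ) : Fin m → ℝ := fun i => (x i : ℝ)

/-- The subgroup of `ℤ^m` generated by a submonoid `M`. -/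
def gp {m : ℕ} (M : AddSubmonoid (Fin m → ℤ)) : AddSubgroup (Fin m → ℤ) :=
  AddSubgroup.closure (M : Set (Fin m → ℤ))

/-- The convex cone in `ℝ^m` generated by `M`: all nonnegative real combinations
of elements of `M`. -/
def coneM {m : ℕ} (M : AddSubmonoid (Fin m → ℤ)) : Set (Fin m → ℝ) :=
  {x | ∃ (n : ℕ) (c : Fin n → ℝ) (v : Fin n → (Fin m → ℤ)),
    (∀ i, 0 ≤ c i) ∧ (∀ i, v i ∈ M) ∧ x = ∑ i, c i • toR (v i)}

/-- Faces of `coneM M`: the cone itself, or an intersection with a supporting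
hyperplane given by a linear form nonnegative on the cone. -/
def IsFace {m : ℕ} (M : AddSubmonoid (Fin m → ℤ)) (F : Set (Fin m → ℝ)) : Prop :=
  F = coneM M ∨ ∃ α : (Fin m → ℝ) →ₗ[ℝ] ℝ,
    (∀ x ∈ coneM M, 0 ≤ α x) ∧ F = {x ∈ coneM M | α x = 0}

/-- A facet: a maximal proper face. -/
def IsFacet {m : ℕ} (M : AddSubmonoid (Fin m → ℤ)) (F : Set (Fin m → ℝ)) : Prop :=
  IsFace M F ∧ F ≠ coneM M ∧ ∀ G, IsFace M G → F ⊆ G → G = F ∨ G = coneM M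

/-- The subgroup `gp(M ∩ F)` of `ℤ^m` generated by the elements of `M` lying
in the face `F`. -/
def gpF {m : ℕ} (M : AddSubmonoid (Fin m → ℤ)) (F : Set (Fin m → ℝ)) :
    AddSubgroup (Fin m → ℤ) :=
  AddSubgroup.closure {a : Fin m → ℤ | a ∈ M ∧ toR a ∈ F}

/-- `M` is seminormal: `z ∈ gp(M)`, `2z ∈ M`, `3z ∈ M` imply `z ∈ M`. -/
def Seminormal {m : ℕ} (M : AddSubmonoid (Fin m → ℤ)) : Prop :=
  ∀ z ∈ gp M, 2 • z ∈ M → 3 • z ∈ M → z ∈ M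

/-- `M` is normal: `z ∈ gp(M)`, `kz ∈ M` for some `k ≥ 1` imply `z ∈ M`. -/
def IsNormal {m : ℕ} (M : AddSubmonoid (Fin m → ℤ)) : Prop :=
  ∀ z ∈ gp M, (∃ k : ℕ, 0 < k ∧ k • z ∈ M) → z ∈ M

/-- `M` is positive: `0` is the only invertible element. -/
def Positive {m : ℕ} (M : AddSubmonoid (Fin m → ℤ)) : Prop :=
  ∀ a ∈ M, -a ∈ M → a = 0

/-- The localization monoid `M_F` of `M` at a face `F`:
elements `a ∈ gp(M)` with `a + b ∈ M` for some `b ∈ M ∩ F`. -/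
def locM {m : ℕ} (M : AddSubmonoid (Fin m → ℤ)) (F : Set (Fin m → ℝ)) :
    Set (Fin m → ℤ) :=
  {a | a ∈ gp M ∧ ∃ b, b ∈ M ∧ toR b ∈ F ∧ a + b ∈ M}

namespace Aux

variable {m : ℕ}

lemma toR_add (x y : Fin m → ℤ) : toR (x + y) = toR x + toR y := by
  funext i; simp [toR]

/-- bundled version of `toR`. -/
def T (m : ℕ) : (Fin m → ℤ) →+ (Fin m → ℝ) := AddMonoidHom.mk' toR toR_add

@[simp] lemma T_apply (x : Fin m → ℤ) : T m x = toR x := rfl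

lemma toR_injective : Function.Injective (toR (m := m)) := by
  intro x y h
  funext i
  have := congrFun h i
  simpa [toR] using this

lemma toR_nsmul (n : ℕ) (x : Fin m → ℤ) : toR (n • x) = (n : ℝ) • toR x := by
  rw [show toR (n • x) = T m (n • x) from rfl, map_nsmul]
  simp [Nat.cast_smul_eq_nsmul]

lemma toR_sum_nsmul (S : Finset (Fin m → ℤ)) (n : (Fin m → ℤ) → ℕ) :
    toR (∑ g ∈ S, n g • g) = ∑ g ∈ S, (n g : ℝ) • toR g := by
  rw [show toR (∑ g ∈ S, n g • g) = T m (∑ g ∈ S, n g • g) from rfl, map_sum]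
  exact Finset.sum_congr rfl fun g _ => toR_nsmul _ _

lemma toR_zero : toR (0 : Fin m → ℤ) = 0 := by funext i; simp [toR]

lemma toR_sub (x y : Fin m → ℤ) : toR (x - y) = toR x - toR y := by
  rw [show toR (x - y) = T m (x - y) from rfl, map_sub]; rfl

lemma toR_finset_sum (s : Finset (Fin m → ℤ)) (f : (Fin m → ℤ) → (Fin m → ℤ)) :
    toR (∑ g ∈ s, f g) = ∑ g ∈ s, toR (f g) := by
  rw [show toR (∑ g ∈ s, f g) = T m (∑ g ∈ s, f g) from rfl, map_sum]; rfl

lemma mem_coneM {M : AddSubmonoid (Fin m → ℤ)} {v : Fin m → ℤ} (hv : v ∈ M) :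
    toR v ∈ coneM M :=
  ⟨1, fun _ => 1, fun _ => v, fun _ => zero_le_one, fun _ => hv, by simp⟩

lemma zero_mem_coneM (M : AddSubmonoid (Fin m → ℤ)) : (0 : Fin m → ℝ) ∈ coneM M :=
  ⟨0, fun i => i.elim0, fun i => i.elim0, fun i => i.elim0, fun i => i.elim0, by simp⟩

lemma exists_rep {M : AddSubmonoid (Fin m → ℤ)} {S : Finset (Fin m → ℤ)}
    (hS : AddSubmonoid.closure (S : Set (Fin m → ℤ)) = M) {v : Fin m → ℤ} (hv : v ∈ M) :
    ∃ n : (Fin m → ℤ) → ℕ, v = ∑ g ∈ S, n g • g := by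
  classical
  rw [← hS] at hv
  induction hv using AddSubmonoid.closure_induction with
  | mem x hx =>
      classical
      refine ⟨fun g => if g = x then 1 else 0, ?_⟩
      simp only [ite_smul, one_smul, zero_smul]
      rw [Finset.sum_ite_eq' S x (fun g => g)]
      simp [Finset.mem_coe.mp hx]
  | zero => exact ⟨fun _ => 0, by simp⟩
  | add x y hx hy ihx ihy =>
      obtain ⟨n₁, rfl⟩ := ihx
      obtain ⟨n₂, rfl⟩ := ihy
      exact ⟨fun g => n₁ g + n₂ g, by rw [← Finset.sum_add_distrib]; simp [add_smul]⟩

lemma closure_sub_rep {s : Set (Fin m → ℤ)} (h0 : (0 : Fin m → ℤ) ∈ s)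
    (hadd : ∀ x ∈ s, ∀ y ∈ s, x + y ∈ s) {a : Fin m → ℤ}
    (ha : a ∈ AddSubgroup.closure s) : ∃ u ∈ s, ∃ v ∈ s, a = u - v := by
  induction ha using AddSubgroup.closure_induction with
  | mem x hx => exact ⟨x, hx, 0, h0, by simp⟩
  | zero => exact ⟨0, h0, 0, h0, by simp⟩
  | add x y hx hy ihx ihy =>
      obtain ⟨u₁, hu₁, v₁, hv₁, rfl⟩ := ihx
      obtain ⟨u₂, hu₂, v₂, hv₂, rfl⟩ := ihy
      exact ⟨u₁ + u₂, hadd _ hu₁ _ hu₂, v₁ + v₂, hadd _ hv₁ _ hv₂, by abel⟩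
  | neg x hx ihx =>
      obtain ⟨u, hu, v, hv, rfl⟩ := ihx
      exact ⟨v, hv, u, hu, by abel⟩

lemma nonneg_on_cone {M : AddSubmonoid (Fin m → ℤ)} {S : Finset (Fin m → ℤ)}
    (hS : AddSubmonoid.closure (S : Set (Fin m → ℤ)) = M) (β : (Fin m → ℝ) →ₗ[ℝ] ℝ)
    (hβ : ∀ g ∈ S, 0 ≤ β (toR g)) : ∀ x ∈ coneM M, 0 ≤ β x := by
  have hM : ∀ v ∈ M, 0 ≤ β (toR v) := by
    intro v hv
    obtain ⟨n, rfl⟩ := exists_rep hS hv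
    rw [toR_sum_nsmul, map_sum]
    refine Finset.sum_nonneg fun g hg => ?_
    rw [map_smul]
    exact mul_nonneg (by positivity) (hβ g hg)
  rintro x ⟨n, c, v, hc, hv, rfl⟩
  rw [map_sum]
  refine Finset.sum_nonneg fun j _ => ?_
  rw [map_smul]
  exact mul_nonneg (hc j) (hM _ (hv j))

lemma vanish_on_cone {M : AddSubmonoid (Fin m → ℤ)} {S : Finset (Fin m → ℤ)}
    (hS : AddSubmonoid.closure (S : Set (Fin m → ℤ)) = M) (β : (Fin m → ℝ) →ₗ[ℝ] ℝ)
    (hβ : ∀ g ∈ S, β (toR g) = 0) : ∀ x ∈ coneM M, β x = 0 := by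
  intro x hx
  have h1 := nonneg_on_cone hS β (fun g hg => (hβ g hg).ge) x hx
  have h2 := nonneg_on_cone hS (-β) (fun g hg => by simp [hβ g hg]) x hx
  simp only [LinearMap.neg_apply, neg_nonneg] at h2
  linarith

/-- Elements of `M` on which `αi` vanishes lie in the span of the generators on
which `αi` vanishes. -/
lemma mem_span_face {M : AddSubmonoid (Fin m → ℤ)} {S : Finset (Fin m → ℤ)}
    (hS : AddSubmonoid.closure (S : Set (Fin m → ℤ)) = M) (αi : (Fin m → ℝ) →ₗ[ℝ] ℝ)
    (hαC : ∀ x ∈ coneM M, 0 ≤ αi x) (Gf : Finset (Fin m → ℤ))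
    (hGf : ∀ g, g ∈ Gf ↔ (g ∈ S ∧ αi (toR g) = 0)) {v : Fin m → ℤ} (hv : v ∈ M)
    (h0 : αi (toR v) = 0) :
    toR v ∈ Submodule.span ℝ ((Gf.image toR : Finset (Fin m → ℝ)) : Set (Fin m → ℝ)) := by
  obtain ⟨n, rfl⟩ := exists_rep hS hv
  rw [toR_sum_nsmul] at h0 ⊢
  rw [map_sum] at h0
  have hterm : ∀ g ∈ S, ((n g : ℝ)) * αi (toR g) = 0 := by
    intro g hg
    have hnn : ∀ g ∈ S, 0 ≤ ((n g : ℝ)) * αi (toR g) := fun g hg =>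
      mul_nonneg (by positivity) (hαC _ (mem_coneM (hS ▸ AddSubmonoid.subset_closure (Finset.mem_coe.mpr hg))))
    have := (Finset.sum_eq_zero_iff_of_nonneg hnn).mp (by simpa [map_smul] using h0) g hg
    exact this
  refine Submodule.sum_mem _ fun g hg => ?_
  rcases mul_eq_zero.mp (hterm g hg) with h | h
  · rw [show ((n g : ℝ)) = 0 from h, zero_smul]; exact Submodule.zero_mem _
  · refine Submodule.smul_mem _ _ (Submodule.subset_span ?_)
    simp only [Finset.coe_image, Set.mem_image, Finset.mem_coe]
    exact ⟨g, (hGf g).mpr ⟨hg, h⟩, rfl⟩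

/-- Points of the cone on which `αi` vanishes lie in the span of the face generators. -/
lemma cone_mem_span_face {M : AddSubmonoid (Fin m → ℤ)} {S : Finset (Fin m → ℤ)}
    (hS : AddSubmonoid.closure (S : Set (Fin m → ℤ)) = M) (αi : (Fin m → ℝ) →ₗ[ℝ] ℝ)
    (hαC : ∀ x ∈ coneM M, 0 ≤ αi x) (Gf : Finset (Fin m → ℤ))
    (hGf : ∀ g, g ∈ Gf ↔ (g ∈ S ∧ αi (toR g) = 0)) {x : Fin m → ℝ} (hx : x ∈ coneM M)
    (h0 : αi x = 0) :
    x ∈ Submodule.span ℝ ((Gf.image toR : Finset (Fin m → ℝ)) : Set (Fin m → ℝ)) := by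
  obtain ⟨n, c, v, hc, hv, rfl⟩ := hx
  rw [map_sum] at h0
  have hterm : ∀ j ∈ Finset.univ (α := Fin n), c j * αi (toR (v j)) = 0 := by
    have hnn : ∀ j ∈ Finset.univ (α := Fin n), 0 ≤ c j * αi (toR (v j)) := fun j _ =>
      mul_nonneg (hc j) (hαC _ (mem_coneM (hv j)))
    intro j hj
    exact (Finset.sum_eq_zero_iff_of_nonneg hnn).mp (by simpa [map_smul] using h0) j hj
  refine Submodule.sum_mem _ fun j _ => ?_
  rcases mul_eq_zero.mp (hterm j (Finset.mem_univ j)) with h | h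
  · rw [h, zero_smul]; exact Submodule.zero_mem _
  · exact Submodule.smul_mem _ _ (mem_span_face hS αi hαC Gf hGf (hv j) h)

lemma coneM_subset_span {M : AddSubmonoid (Fin m → ℤ)} {S : Finset (Fin m → ℤ)}
    (hS : AddSubmonoid.closure (S : Set (Fin m → ℤ)) = M) :
    coneM M ⊆ (Submodule.span ℝ (toR '' (S : Set (Fin m → ℤ))) : Set (Fin m → ℝ)) := by
  rintro x ⟨n, c, v, hc, hv, rfl⟩
  refine Submodule.sum_mem _ fun j _ => Submodule.smul_mem _ _ ?_
  obtain ⟨nn, hnn⟩ := exists_rep hS (hv j)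
  rw [hnn, toR_sum_nsmul]
  exact Submodule.sum_mem _ fun g hg => Submodule.smul_mem _ _
    (Submodule.subset_span ⟨g, Finset.mem_coe.mpr hg, rfl⟩)

lemma affineSpan_coneM_eq {M : AddSubmonoid (Fin m → ℤ)} {S : Finset (Fin m → ℤ)}
    (hS : AddSubmonoid.closure (S : Set (Fin m → ℤ)) = M) :
    ((affineSpan ℝ (coneM M) : AffineSubspace ℝ (Fin m → ℝ)) : Set (Fin m → ℝ)) =
      (Submodule.span ℝ (toR '' (S : Set (Fin m → ℤ))) : Set (Fin m → ℝ)) := by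
  apply Set.Subset.antisymm
  · have hle : affineSpan ℝ (coneM M) ≤
        (Submodule.span ℝ (toR '' (S : Set (Fin m → ℤ)))).toAffineSubspace := by
      rw [affineSpan_le]
      intro x hx
      exact Submodule.mem_toAffineSubspace.mpr (coneM_subset_span hS hx)
    intro x hx
    exact Submodule.mem_toAffineSubspace.mp (hle hx)
  · intro y hy
    have h0 : (0 : Fin m → ℝ) ∈ affineSpan ℝ (coneM M) :=
      subset_affineSpan ℝ _ (zero_mem_coneM M)
    have hy' : y ∈ Submodule.span ℝ (toR '' (S : Set (Fin m → ℤ))) := hy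
    clear hy
    induction hy' using Submodule.span_induction with
    | mem z hz =>
        obtain ⟨g, hg, rfl⟩ := hz
        exact subset_affineSpan ℝ _ (mem_coneM (hS ▸ AddSubmonoid.subset_closure hg))
    | zero => exact h0
    | add p q hp hq ihp ihq =>
        have hd := AffineSubspace.vsub_mem_direction ihp h0
        have := AffineSubspace.vadd_mem_of_mem_direction (by simpa using hd) ihq
        simpa [vadd_eq_add] using this
    | smul r p hp ihp =>
        have hd := AffineSubspace.vsub_mem_direction ihp h0
        have hd' : r • p ∈ (affineSpan ℝ (coneM M)).direction := by
          simpa using Submodule.smul_mem _ r hd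
        have := AffineSubspace.vadd_mem_of_mem_direction hd' h0
        simpa [vadd_eq_add] using this

lemma mem_intrinsicInterior_of_pos {M : AddSubmonoid (Fin m → ℤ)} {S : Finset (Fin m → ℤ)}
    (hS : AddSubmonoid.closure (S : Set (Fin m → ℤ)) = M) (c : (Fin m → ℤ) → ℝ)
    (hc : ∀ g ∈ S, 0 < c g) {x : Fin m → ℝ} (hx : x = ∑ g ∈ S, c g • toR g) :
    x ∈ intrinsicInterior ℝ (coneM M) := by
  classical
  set v : ↥S → (Fin m → ℝ) := fun g => toR g.1 with hv
  have hrange : Set.range v = toR '' (S : Set (Fin m → ℤ)) := by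
    ext y
    constructor
    · rintro ⟨g, rfl⟩; exact ⟨g.1, g.2, rfl⟩
    · rintro ⟨g, hg, rfl⟩; exact ⟨⟨g, hg⟩, rfl⟩
  set U : Submodule ℝ (Fin m → ℝ) := Submodule.span ℝ (Set.range v) with hU
  set ψ : (↥S → ℝ) →ₗ[ℝ] (Fin m → ℝ) := Fintype.linearCombination ℝ v with hψ
  have hψr : LinearMap.range ψ = U := Fintype.range_linearCombination ℝ v
  have hmem : ∀ f, ψ f ∈ U := fun f => hψr ▸ LinearMap.mem_range_self ψ f
  set ψc : (↥S → ℝ) →ₗ[ℝ] ↥U := ψ.codRestrict U hmem with hψc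
  have hsurj : Function.Surjective ψc := by
    rintro ⟨y, hy⟩
    rw [← hψr] at hy
    obtain ⟨f, hf⟩ := hy
    exact ⟨f, Subtype.ext hf⟩
  set ψL := LinearMap.toContinuousLinearMap ψc with hψL
  have hopen : IsOpenMap ψL := ContinuousLinearMap.isOpenMap ψL hsurj
  set O : Set (↥S → ℝ) := {f | ∀ g, 0 < f g} with hO
  have hOopen : IsOpen O := by
    have : O = ⋂ g : ↥S, (fun f : ↥S → ℝ => f g) ⁻¹' Set.Ioi 0 := by
      ext f; simp [hO, Set.mem_iInter]
    rw [this]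
    exact isOpen_iInter_of_finite fun g => isOpen_Ioi.preimage (continuous_apply g)
  have himg : IsOpen (ψL '' O) := hopen O hOopen
  obtain ⟨V, hVopen, hVeq⟩ := isOpen_induced_iff.mp himg
  set c' : ↥S → ℝ := fun g => c g.1 with hc'
  have hψx : ψ c' = x := by
    rw [hψ, Fintype.linearCombination_apply, hx]
    exact Finset.sum_coe_sort S (fun g => c g • toR g)
  have hxU : x ∈ U := hψx ▸ hmem c'
  have hxV : x ∈ V := by
    have : ψL c' ∈ ψL '' O := Set.mem_image_of_mem _ (fun g => hc g.1 g.2)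
    rw [← hVeq] at this
    have h2 : (ψL c' : Fin m → ℝ) ∈ V := this
    have h3 : (ψL c' : Fin m → ℝ) = x := by
      show (ψ c' : Fin m → ℝ) = x
      exact hψx
    rwa [h3] at h2
  have hVC : ∀ y, y ∈ V → y ∈ U → y ∈ coneM M := by
    intro y hyV hyU
    have : (⟨y, hyU⟩ : ↥U) ∈ ψL '' O := by rw [← hVeq]; exact hyV
    obtain ⟨f, hfO, hf⟩ := this
    have hfy : ψ f = y := congrArg Subtype.val hf
    refine ⟨Fintype.card ↥S, fun j => f ((Fintype.equivFin ↥S).symm j),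
      fun j => ((Fintype.equivFin ↥S).symm j).1, fun j => (hfO _).le,
      fun j => hS ▸ AddSubmonoid.subset_closure ((Fintype.equivFin ↥S).symm j).2, ?_⟩
    rw [← hfy, hψ, Fintype.linearCombination_apply]
    exact (Fintype.sum_equiv (Fintype.equivFin ↥S).symm _ _ fun j => rfl).symm
  have hAU := affineSpan_coneM_eq hS
  rw [← hrange, ← hU] at hAU
  have hxA : x ∈ affineSpan ℝ (coneM M) := by
    have : x ∈ (affineSpan ℝ (coneM M) : Set (Fin m → ℝ)) := by rw [hAU]; exact hxU
    exact this
  refine mem_intrinsicInterior.mpr ⟨⟨x, hxA⟩, ?_, rfl⟩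
  refine mem_interior.mpr ⟨(Subtype.val) ⁻¹' V, ?_, hVopen.preimage continuous_subtype_val, hxV⟩
  intro z hz
  have hzU : (z : Fin m → ℝ) ∈ U := by
    have : (z : Fin m → ℝ) ∈ (affineSpan ℝ (coneM M) : Set (Fin m → ℝ)) := z.2
    rwa [hAU] at this
  exact hVC _ hz hzU

/-- KEY: for a facet with supporting form `αi`, every generator lies in
`span(face generators) + ℝ • g₀` for any fixed generator `g₀` off the facet. -/
lemma key_codim {M : AddSubmonoid (Fin m → ℤ)} {S : Finset (Fin m → ℤ)}
    (hS : AddSubmonoid.closure (S : Set (Fin m → ℤ)) = M) (αi : (Fin m → ℝ) →ₗ[ℝ] ℝ)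
    (hαC : ∀ x ∈ coneM M, 0 ≤ αi x)
    (hmax : ∀ G, IsFace M G → {x ∈ coneM M | αi x = 0} ⊆ G →
      G = {x ∈ coneM M | αi x = 0} ∨ G = coneM M)
    (Gf : Finset (Fin m → ℤ)) (hGf : ∀ g, g ∈ Gf ↔ (g ∈ S ∧ αi (toR g) = 0))
    {g₀ : Fin m → ℤ} (hg₀ : g₀ ∈ S) (hg₀p : 0 < αi (toR g₀)) :
    ∀ g ∈ S, toR g - (αi (toR g) / αi (toR g₀)) • toR g₀ ∈
      Submodule.span ℝ ((Gf.image toR : Finset (Fin m → ℝ)) : Set (Fin m → ℝ)) := by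
  classical
  set W := Submodule.span ℝ ((Gf.image toR : Finset (Fin m → ℝ)) : Set (Fin m → ℝ)) with hW
  have hmemM : ∀ g ∈ S, g ∈ M := fun g hg => hS ▸ AddSubmonoid.subset_closure hg
  have hαnn : ∀ g ∈ S, 0 ≤ αi (toR g) := fun g hg => hαC _ (mem_coneM (hmemM g hg))
  have hGfW : ∀ g ∈ Gf, toR g ∈ W :=
    fun g hg => Submodule.subset_span (by
      simp only [Finset.coe_image, Set.mem_image, Finset.mem_coe]; exact ⟨g, hg, rfl⟩)
  by_contra hcon
  push_neg at hcon
  obtain ⟨g₁, hg₁S, hg₁W⟩ := hcon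
  -- `αi (toR g₁) > 0`
  have hα₁ : 0 < αi (toR g₁) := by
    rcases (hαnn g₁ hg₁S).lt_or_eq with h | h
    · exact h
    · exfalso
      apply hg₁W
      rw [← h, zero_div, zero_smul, sub_zero]
      exact hGfW g₁ ((hGf g₁).mpr ⟨hg₁S, h.symm⟩)
  set w := toR g₁ - (αi (toR g₁) / αi (toR g₀)) • toR g₀ with hwdef
  obtain ⟨W', hWc⟩ := Submodule.exists_isCompl W
  set π := W'.projectionOnto W hWc.symm with hπ
  have hπW : ∀ u ∈ W, π u = 0 := by
    intro u hu
    have : u ∈ LinearMap.ker π := by rw [Submodule.ker_projectionOnto]; exact hu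
    exact this
  have hπw : π w ≠ 0 := by
    intro h
    apply hg₁W
    have : w ∈ LinearMap.ker π := h
    rwa [Submodule.ker_projectionOnto] at this
  have hval : ∃ j : Fin m, (π w : Fin m → ℝ) j ≠ 0 := by
    by_contra h
    push_neg at h
    exact hπw (Subtype.ext (funext h))
  obtain ⟨j, hj⟩ := hval
  set ψ : (Fin m → ℝ) →ₗ[ℝ] ℝ := (LinearMap.proj j) ∘ₗ W'.subtype ∘ₗ π with hψdef
  have hψW : ∀ u ∈ W, ψ u = 0 := by
    intro u hu; simp [hψdef, hπW u hu]
  have hψw : ψ w ≠ 0 := by simpa [hψdef] using hj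
  set vals : (Fin m → ℤ) → ℝ := fun g => ψ (toR g) / αi (toR g) with hvals
  set Sn : Finset (Fin m → ℤ) := S \ Gf with hSn
  have hg₀Sn : g₀ ∈ Sn := by
    rw [hSn, Finset.mem_sdiff]
    exact ⟨hg₀, fun h => (hg₀p.ne' ((hGf g₀).mp h).2)⟩
  have hg₁Sn : g₁ ∈ Sn := by
    rw [hSn, Finset.mem_sdiff]
    exact ⟨hg₁S, fun h => (hα₁.ne' ((hGf g₁).mp h).2)⟩
  have hSnpos : ∀ g ∈ Sn, 0 < αi (toR g) := by
    intro g hg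
    rw [hSn, Finset.mem_sdiff] at hg
    rcases (hαnn g hg.1).lt_or_eq with h | h
    · exact h
    · exact absurd ((hGf g).mpr ⟨hg.1, h.symm⟩) hg.2
  obtain ⟨gs, hgsSn, hgsmin⟩ := Sn.exists_min_image vals ⟨g₀, hg₀Sn⟩
  set μ := vals gs with hμ
  set β : (Fin m → ℝ) →ₗ[ℝ] ℝ := ψ - μ • αi with hβdef
  have hβg : ∀ g ∈ Sn, β (toR g) = (vals g - μ) * αi (toR g) := by
    intro g hg
    have hpos := hSnpos g hg
    rw [hβdef]
    simp only [LinearMap.sub_apply, LinearMap.smul_apply, smul_eq_mul]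
    rw [hvals]
    field_simp
  have hβS : ∀ g ∈ S, 0 ≤ β (toR g) := by
    intro g hg
    by_cases hgf : g ∈ Gf
    · have h1 : ψ (toR g) = 0 := hψW _ (hGfW g hgf)
      have h2 : αi (toR g) = 0 := ((hGf g).mp hgf).2
      simp [hβdef, h1, h2]
    · have hgSn : g ∈ Sn := by rw [hSn, Finset.mem_sdiff]; exact ⟨hg, hgf⟩
      rw [hβg g hgSn]
      exact mul_nonneg (sub_nonneg.mpr (hgsmin g hgSn)) (hSnpos g hgSn).le
  have hβC : ∀ x ∈ coneM M, 0 ≤ β x := nonneg_on_cone hS β hβS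
  -- some generator with `β > 0`
  have hdiff : vals g₁ ≠ vals g₀ := by
    intro h
    apply hψw
    have h₀ : αi (toR g₀) ≠ 0 := hg₀p.ne'
    have h₁ : αi (toR g₁) ≠ 0 := hα₁.ne'
    have : ψ w = ψ (toR g₁) - (αi (toR g₁) / αi (toR g₀)) * ψ (toR g₀) := by
      rw [hwdef]; simp [map_sub, map_smul, smul_eq_mul]
    rw [this]
    rw [hvals] at h
    field_simp at h
    field_simp
    linarith [h]
  have hplus : ∃ gp ∈ Sn, μ < vals gp := by
    rcases lt_or_ge μ (vals g₀) with h | h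
    · exact ⟨g₀, hg₀Sn, h⟩
    · refine ⟨g₁, hg₁Sn, ?_⟩
      have h1 := hgsmin g₀ hg₀Sn
      have h2 := hgsmin g₁ hg₁Sn
      have : μ = vals g₀ := le_antisymm h1 h
      rcases h2.lt_or_eq with h3 | h3
      · exact h3
      · exact absurd (h3 ▸ this) hdiff
  obtain ⟨gplus, hgplusSn, hgplus⟩ := hplus
  have hgplusS : gplus ∈ S := (Finset.mem_sdiff.mp (hSn ▸ hgplusSn)).1
  have hβplus : 0 < β (toR gplus) := by
    rw [hβg gplus hgplusSn]
    exact mul_pos (sub_pos.mpr hgplus) (hSnpos gplus hgplusSn)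
  -- the face cut out by β
  set Fβ : Set (Fin m → ℝ) := {x ∈ coneM M | β x = 0} with hFβ
  have hFβface : IsFace M Fβ := Or.inr ⟨β, hβC, rfl⟩
  have hsub : {x ∈ coneM M | αi x = 0} ⊆ Fβ := by
    rintro x ⟨hxC, hx0⟩
    have hxW : x ∈ W := cone_mem_span_face hS αi hαC Gf hGf hxC hx0
    have : β x = 0 := by
      rw [hβdef]
      simp [hψW x hxW, hx0]
    exact ⟨hxC, this⟩
  rcases hmax Fβ hFβface hsub with h | h
  · have hgsF : toR gs ∈ Fβ := by
      refine ⟨mem_coneM (hmemM gs (Finset.mem_sdiff.mp (hSn ▸ hgsSn)).1), ?_⟩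
      rw [hβg gs hgsSn, hμ]
      ring
    rw [h] at hgsF
    exact (hSnpos gs hgsSn).ne' hgsF.2
  · have : toR gplus ∈ Fβ := by rw [h]; exact mem_coneM (hmemM gplus hgplusS)
    exact hβplus.ne' this.2

end Aux

/-- If `gp(M) ∩ relint(cone(M)) ⊆ M`, then for each facet `F_i`
with defining linear form `α_i`,
`M_i = (gp(M) ∩ {α_i > 0}) ∪ gp(M ∩ F_i)`. -/


theorem locM_eq_union {m : ℕ} (M : AddSubmonoid (Fin m → ℤ)) (hFG : M.FG)
    (t : ℕ) (F : Fin t → Set (Fin m → ℝ)) (α : Fin t → ((Fin m → ℝ) →ₗ[ℝ] ℝ))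
    (hα : ∀ i, ∀ x ∈ coneM M, 0 ≤ α i x)
    (hFdef : ∀ i, F i = {x ∈ coneM M | α i x = 0})
    (hfacets : ∀ G : Set (Fin m → ℝ), IsFacet M G ↔ ∃ i, G = F i)
    (hrel : ∀ z ∈ gp M, toR z ∈ intrinsicInterior ℝ (coneM M) → z ∈ M) :
    ∀ i, locM M (F i) =
      {a : Fin m → ℤ | a ∈ gp M ∧ 0 < α i (toR a)} ∪ (gpF M (F i) : Set (Fin m → ℤ)) := by
  classical
  intro i
  obtain ⟨S, hS⟩ := hFG
  have hFacet : IsFacet M (F i) := (hfacets (F i)).mpr ⟨i, rfl⟩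
  have hmemM : ∀ g ∈ S, g ∈ M := fun g hg =>
    hS ▸ AddSubmonoid.subset_closure (Finset.mem_coe.mpr hg)
  set Gf : Finset (Fin m → ℤ) := S.filter (fun g => α i (toR g) = 0) with hGfdef
  have hGf : ∀ g, g ∈ Gf ↔ (g ∈ S ∧ α i (toR g) = 0) := by
    intro g; simp [hGfdef]
  have hGfS : ∀ g ∈ Gf, g ∈ S := fun g hg => ((hGf g).mp hg).1
  have hαnn : ∀ g ∈ S, 0 ≤ α i (toR g) := fun g hg =>
    hα i _ (Aux.mem_coneM (hmemM g hg))
  -- the face as a subset of `ℤ^m`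
  set sF : Set (Fin m → ℤ) := {a : Fin m → ℤ | a ∈ M ∧ toR a ∈ F i} with hsF
  have h0sF : (0 : Fin m → ℤ) ∈ sF := by
    refine ⟨M.zero_mem, ?_⟩
    rw [hFdef i, Aux.toR_zero]
    exact ⟨Aux.zero_mem_coneM M, map_zero _⟩
  have haddsF : ∀ x ∈ sF, ∀ y ∈ sF, x + y ∈ sF := by
    rintro x ⟨hxM, hxF⟩ y ⟨hyM, hyF⟩
    rw [hFdef i] at hxF hyF
    refine ⟨M.add_mem hxM hyM, ?_⟩
    rw [hFdef i]
    exact ⟨Aux.mem_coneM (M.add_mem hxM hyM),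
      by rw [Aux.toR_add, map_add, hxF.2, hyF.2, add_zero]⟩
  ext a
  simp only [Set.mem_union, Set.mem_setOf_eq, SetLike.mem_coe]
  constructor
  · rintro ⟨haG, b, hbM, hbF, habM⟩
    have hbF' := hbF
    rw [hFdef i] at hbF'
    have hab : 0 ≤ α i (toR (a + b)) := hα i _ (Aux.mem_coneM habM)
    rw [Aux.toR_add, map_add, hbF'.2, add_zero] at hab
    rcases hab.lt_or_eq with h | h
    · exact Or.inl ⟨haG, h⟩
    · refine Or.inr ?_
      have habF : (a + b) ∈ sF := by
        refine ⟨habM, ?_⟩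
        rw [hFdef i]
        exact ⟨Aux.mem_coneM habM, by rw [Aux.toR_add, map_add, hbF'.2, ← h, add_zero]⟩
      have hbsF : b ∈ sF := ⟨hbM, hbF⟩
      have : a = (a + b) - b := by abel
      rw [this]
      exact AddSubgroup.sub_mem _ (AddSubgroup.subset_closure habF)
        (AddSubgroup.subset_closure hbsF)
  · rintro (⟨haG, hpos⟩ | haF)
    · -- hard case
      -- a generator with `α i > 0`
      have hg₀ex : ∃ g₀ ∈ S, 0 < α i (toR g₀) := by
        by_contra hcon
        push_neg at hcon
        have hz : ∀ g ∈ S, α i (toR g) = 0 := fun g hg =>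
          le_antisymm (hcon g hg) (hαnn g hg)
        have hv := Aux.vanish_on_cone hS (α i) hz
        apply hFacet.2.1
        rw [hFdef i]
        exact Set.ext fun x => ⟨fun h => h.1, fun h => ⟨h, hv x h⟩⟩
      obtain ⟨g₀, hg₀S, hg₀p⟩ := hg₀ex
      have hα₀ : α i (toR g₀) ≠ 0 := hg₀p.ne'
      have hmax : ∀ G, IsFace M G → {x ∈ coneM M | α i x = 0} ⊆ G →
          G = {x ∈ coneM M | α i x = 0} ∨ G = coneM M := by
        have h := hFacet.2.2
        rw [hFdef i] at h
        exact h
      have hkey := Aux.key_codim hS (α i) (hα i) hmax Gf hGf hg₀S hg₀p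
      set W := Submodule.span ℝ ((Gf.image toR : Finset (Fin m → ℝ)) : Set (Fin m → ℝ))
        with hW
      -- representation of `a`
      obtain ⟨u, huM, v, hvM, hauv⟩ := Aux.closure_sub_rep (s := (M : Set (Fin m → ℤ)))
        M.zero_mem (fun x hx y hy => M.add_mem hx hy) haG
      obtain ⟨nu, hnu⟩ := Aux.exists_rep hS huM
      obtain ⟨nv, hnv⟩ := Aux.exists_rep hS hvM
      set z : (Fin m → ℤ) → ℝ := fun g => (nu g : ℝ) - (nv g : ℝ) with hz
      have htoRa : toR a = ∑ g ∈ S, z g • toR g := by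
        rw [hauv, Aux.toR_sub, hnu, hnv, Aux.toR_sum_nsmul, Aux.toR_sum_nsmul,
          ← Finset.sum_sub_distrib]
        exact Finset.sum_congr rfl fun g _ => by rw [hz, sub_smul]
      set ρ : (Fin m → ℤ) → ℝ := fun g => α i (toR g) / α i (toR g₀) with hρ
      have hαa : α i (toR a) = ∑ g ∈ S, z g * α i (toR g) := by
        rw [htoRa, map_sum]
        exact Finset.sum_congr rfl fun g _ => by rw [map_smul, smul_eq_mul]
      set r₀ : ℝ := α i (toR a) / α i (toR g₀) with hr₀def
      have hr₀ : 0 < r₀ := div_pos hpos hg₀p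
      set Tt : ℝ := ∑ g ∈ S, ρ g with hTt
      have hT1 : 1 ≤ Tt := by
        have h1 : ρ g₀ = 1 := by rw [hρ]; field_simp
        have := Finset.single_le_sum (f := ρ)
          (fun g hg => div_nonneg (hαnn g hg) hg₀p.le) hg₀S
        rw [h1] at this
        exact this
      have hTpos : 0 < Tt := lt_of_lt_of_le one_pos hT1
      set ε : ℝ := r₀ / (2 * Tt) with hε
      have hεpos : 0 < ε := by positivity
      have hεT : ε * Tt = r₀ / 2 := by rw [hε]; field_simp
      have hzρ : ∑ g ∈ S, z g * ρ g = r₀ := by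
        rw [hr₀def, hαa, Finset.sum_div]
        exact Finset.sum_congr rfl fun g _ => by rw [hρ, mul_div_assoc]
      -- the W-part
      set ω : Fin m → ℝ := ∑ g ∈ S, (z g - ε) • (toR g - ρ g • toR g₀) with hω
      have hωW : ω ∈ W := Submodule.sum_mem _ fun g hg =>
        Submodule.smul_mem _ _ (hkey g hg)
      obtain ⟨f, -, hf⟩ := Submodule.mem_span_finset.mp hωW
      have hfω : ∑ g ∈ Gf, f (toR g) • toR g = ω := by
        rw [← hf, Finset.sum_image (fun x _ y _ h => Aux.toR_injective h)]
      obtain ⟨N, hN⟩ := exists_nat_gt (∑ h ∈ Gf, |f (toR h)|)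
      -- the element of the face
      set b₀ : Fin m → ℤ := ∑ g ∈ Gf, g with hb₀
      have hb₀M : b₀ ∈ M := AddSubmonoid.sum_mem _ fun g hg => hmemM g (hGfS g hg)
      set b : Fin m → ℤ := N • b₀ with hb
      have hbM : b ∈ M := AddSubmonoid.nsmul_mem _ hb₀M N
      have hαb₀ : α i (toR b₀) = 0 := by
        rw [hb₀, show toR (∑ g ∈ Gf, g) = ∑ g ∈ Gf, toR g from Aux.toR_finset_sum Gf _,
          map_sum]
        exact Finset.sum_eq_zero fun g hg => ((hGf g).mp hg).2
      have hbF : toR b ∈ F i := by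
        rw [hFdef i]
        refine ⟨Aux.mem_coneM hbM, ?_⟩
        rw [hb, Aux.toR_nsmul, map_smul, hαb₀, smul_eq_mul, mul_zero]
      -- the coefficients
      set c : (Fin m → ℤ) → ℝ := fun g =>
        ε + (if g = g₀ then (r₀ - ε * Tt) else 0) +
          (if g ∈ Gf then f (toR g) + N else 0) with hc
      have hcpos : ∀ g ∈ S, 0 < c g := by
        intro g hg
        simp only [hc]
        by_cases hgf : g ∈ Gf
        · have hgne : g ≠ g₀ := by
            intro h
            exact hα₀ (h ▸ ((hGf g).mp hgf).2)
          rw [if_neg hgne, if_pos hgf, add_zero]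
          have h1 : |f (toR g)| ≤ ∑ h ∈ Gf, |f (toR h)| :=
            Finset.single_le_sum (f := fun h => |f (toR h)|) (fun h _ => abs_nonneg _) hgf
          have h2 : -(N : ℝ) < f (toR g) := by
            have := neg_abs_le (f (toR g))
            linarith
          linarith
        · by_cases hgg : g = g₀
          · rw [if_pos hgg, if_neg hgf, add_zero, hεT]
            linarith
          · rw [if_neg hgg, if_neg hgf, add_zero, add_zero]
            linarith
      -- the sum identity
      have hsum : ∑ g ∈ S, c g • toR g = toR a + (N : ℝ) • toR b₀ := by
        have hstep : ∀ g ∈ S, c g • toR g =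
            ε • toR g + (if g = g₀ then (r₀ - ε * Tt) else 0) • toR g +
              (if g ∈ Gf then f (toR g) + (N : ℝ) else 0) • toR g := by
          intro g hg
          rw [hc]
          simp only [add_smul]
        rw [Finset.sum_congr rfl hstep]
        rw [Finset.sum_add_distrib, Finset.sum_add_distrib]
        have e2 : ∑ g ∈ S, (if g = g₀ then (r₀ - ε * Tt) else 0) • toR g =
            (r₀ - ε * Tt) • toR g₀ := by
          simp only [ite_smul, zero_smul]
          rw [Finset.sum_ite_eq' S g₀ (fun g => (r₀ - ε * Tt) • toR g), if_pos hg₀S]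
        have e3 : ∑ g ∈ S, (if g ∈ Gf then f (toR g) + (N : ℝ) else 0) • toR g =
            ω + (N : ℝ) • toR b₀ := by
          simp only [ite_smul, zero_smul]
          rw [Finset.sum_ite_mem, Finset.inter_eq_right.mpr hGfS]
          have : ∑ g ∈ Gf, (f (toR g) + (N : ℝ)) • toR g =
              ∑ g ∈ Gf, f (toR g) • toR g + (N : ℝ) • ∑ g ∈ Gf, toR g := by
            rw [Finset.smul_sum, ← Finset.sum_add_distrib]
            exact Finset.sum_congr rfl fun g _ => by rw [add_smul]
          rw [this, hfω, hb₀,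
            show toR (∑ g ∈ Gf, g) = ∑ g ∈ Gf, toR g from Aux.toR_finset_sum Gf _]
        rw [e2, e3, ← Finset.smul_sum]
        -- now the main algebra
        have e1 : ω = (toR a - ε • ∑ g ∈ S, toR g) - (r₀ - ε * Tt) • toR g₀ := by
          rw [hω]
          have expand : ∀ g ∈ S, (z g - ε) • (toR g - ρ g • toR g₀) =
              (z g • toR g - ε • toR g) - ((z g * ρ g - ε * ρ g) • toR g₀) := by
            intro g hg
            module
          rw [Finset.sum_congr rfl expand, Finset.sum_sub_distrib, Finset.sum_sub_distrib]
          rw [← Finset.sum_smul, Finset.sum_sub_distrib, hzρ, ← Finset.mul_sum, ← hTt]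
          rw [htoRa, Finset.smul_sum]
        rw [e1]
        abel
      -- conclude via the relative interior
      have hragM : a + b ∈ gp M := by
        refine AddSubgroup.add_mem _ haG (AddSubgroup.subset_closure hbM)
      have hint : toR (a + b) ∈ intrinsicInterior ℝ (coneM M) := by
        refine Aux.mem_intrinsicInterior_of_pos hS c hcpos ?_
        rw [Aux.toR_add, hsum, hb, Aux.toR_nsmul]
      have habM : a + b ∈ M := hrel _ hragM hint
      exact ⟨haG, b, hbM, hbF, habM⟩
    · -- easy case : `a ∈ gpF`
      obtain ⟨u, huF, v, hvF, hauv⟩ := Aux.closure_sub_rep h0sF haddsF haF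
      refine ⟨?_, v, hvF.1, hvF.2, ?_⟩
      · rw [hauv]
        exact AddSubgroup.sub_mem _ (AddSubgroup.subset_closure huF.1)
          (AddSubgroup.subset_closure hvF.1)
      · have : a + v = u := by rw [hauv]; abel
        rw [this]
        exact huF.1
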